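/- Let G be a finite simple graph with vertex set V. For every vertex v: the sum over all neighbors a of v of ( n2e(a) − n2c(v,a) ) equals F4(v) + 2·F7(v) + F8''(v) + 2·F9'(v). -/

import Mathlib

open Finset
open scoped Classical

namespace FourProfiles

variable {V : Type*} [Fintype V] [DecidableEq V]

/-- Number of 3-element subsets of `V \ {v}` admitting a labeling `a, b, c` satisfying `P`. -/
noncomputable def cnt3 (v : V) (P : V → V → V → Prop) : ℕ :=
  (((Finset.univ : Finset V).powersetCard 3).filter
    (fun s => v ∉ s ∧ ∃ a ∈ s, ∃ b ∈ s, ∃ c ∈ s, s = {a, b, c} ∧ P a b c)).card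

variable (G : SimpleGraph V)

/-- Induced subgraph on `{v,a,b,c}` has exactly one edge, with `v` an endpoint. -/
noncomputable def F1 (v : V) : ℕ := cnt3 v fun a b c =>
  G.Adj v a ∧ ¬G.Adj v b ∧ ¬G.Adj v c ∧ ¬G.Adj a b ∧ ¬G.Adj a c ∧ ¬G.Adj b c

/-- Induced subgraph on `{v,a,b,c}` is a perfect matching (two disjoint edges). -/
noncomputable def F2 (v : V) : ℕ := cnt3 v fun a b c =>
  G.Adj v a ∧ G.Adj b c ∧ ¬G.Adj v b ∧ ¬G.Adj v c ∧ ¬G.Adj a b ∧ ¬G.Adj a c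

/-- Two-edge path plus isolated vertex, `v` an endpoint of the path. -/
noncomputable def F3 (v : V) : ℕ := cnt3 v fun a b c =>
  G.Adj v a ∧ G.Adj a b ∧ ¬G.Adj v b ∧ ¬G.Adj v c ∧ ¬G.Adj a c ∧ ¬G.Adj b c

/-- Two-edge path plus isolated vertex, `v` the middle vertex of the path. -/
noncomputable def F3' (v : V) : ℕ := cnt3 v fun a b c =>
  G.Adj v a ∧ G.Adj v b ∧ ¬G.Adj a b ∧ ¬G.Adj v c ∧ ¬G.Adj a c ∧ ¬G.Adj b c

/-- Path on four vertices, `v` an endpoint. -/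
noncomputable def F4 (v : V) : ℕ := cnt3 v fun a b c =>
  G.Adj v a ∧ G.Adj a b ∧ G.Adj b c ∧ ¬G.Adj v b ∧ ¬G.Adj v c ∧ ¬G.Adj a c

/-- Path on four vertices, `v` an internal (degree-2) vertex. -/
noncomputable def F4' (v : V) : ℕ := cnt3 v fun a b c =>
  G.Adj v a ∧ G.Adj v b ∧ G.Adj b c ∧ ¬G.Adj a b ∧ ¬G.Adj v c ∧ ¬G.Adj a c

/-- Triangle plus isolated vertex, `v` in the triangle. -/
noncomputable def F5 (v : V) : ℕ := cnt3 v fun a b c =>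
  G.Adj v a ∧ G.Adj v b ∧ G.Adj a b ∧ ¬G.Adj v c ∧ ¬G.Adj a c ∧ ¬G.Adj b c

/-- Star `K_{1,3}`, `v` a leaf. -/
noncomputable def F6 (v : V) : ℕ := cnt3 v fun a b c =>
  G.Adj v a ∧ G.Adj a b ∧ G.Adj a c ∧ ¬G.Adj v b ∧ ¬G.Adj v c ∧ ¬G.Adj b c

/-- Star `K_{1,3}`, `v` the center. -/
noncomputable def F6' (v : V) : ℕ := cnt3 v fun a b c =>
  G.Adj v a ∧ G.Adj v b ∧ G.Adj v c ∧ ¬G.Adj a b ∧ ¬G.Adj a c ∧ ¬G.Adj b c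

/-- 4-cycle. -/
noncomputable def F7 (v : V) : ℕ := cnt3 v fun a b c =>
  G.Adj v a ∧ G.Adj a b ∧ G.Adj b c ∧ G.Adj v c ∧ ¬G.Adj v b ∧ ¬G.Adj a c

/-- Paw (triangle with a pendant edge), `v` the pendant (degree-1) vertex. -/
noncomputable def F8 (v : V) : ℕ := cnt3 v fun a b c =>
  G.Adj v a ∧ G.Adj a b ∧ G.Adj a c ∧ G.Adj b c ∧ ¬G.Adj v b ∧ ¬G.Adj v c

/-- Paw, `v` the degree-3 vertex. -/
noncomputable def F8' (v : V) : ℕ := cnt3 v fun a b c =>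
  G.Adj v a ∧ G.Adj v b ∧ G.Adj a b ∧ G.Adj v c ∧ ¬G.Adj a c ∧ ¬G.Adj b c

/-- Paw, `v` one of the two degree-2 vertices. -/
noncomputable def F8'' (v : V) : ℕ := cnt3 v fun a b c =>
  G.Adj v a ∧ G.Adj v b ∧ G.Adj a b ∧ G.Adj a c ∧ ¬G.Adj v c ∧ ¬G.Adj b c

/-- Diamond (`K4` minus one edge), `v` one of the two degree-2 vertices. -/
noncomputable def F9 (v : V) : ℕ := cnt3 v fun a b c =>
  G.Adj v a ∧ G.Adj v b ∧ G.Adj a b ∧ G.Adj a c ∧ G.Adj b c ∧ ¬G.Adj v c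

/-- Diamond, `v` one of the two degree-3 vertices. -/
noncomputable def F9' (v : V) : ℕ := cnt3 v fun a b c =>
  G.Adj v a ∧ G.Adj v b ∧ G.Adj v c ∧ G.Adj a b ∧ G.Adj a c ∧ ¬G.Adj b c

/-- Complete graph `K4`. -/
noncomputable def F10 (v : V) : ℕ := cnt3 v fun a b c =>
  G.Adj v a ∧ G.Adj v b ∧ G.Adj v c ∧ G.Adj a b ∧ G.Adj a c ∧ G.Adj b c

/-- `|V \ (Γ(v) ∪ Γ(a))|`. -/
noncomputable def n1e (v a : V) : ℕ :=
  (Finset.univ.filter fun x => ¬G.Adj v x ∧ ¬G.Adj a x).card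

/-- `|Γ(v) \ (Γ(a) ∪ {a})|`. -/
noncomputable def n2c (v a : V) : ℕ :=
  (Finset.univ.filter fun x => G.Adj v x ∧ ¬G.Adj a x ∧ x ≠ a).card

/-- `|Γ(a) \ (Γ(v) ∪ {v})|`. -/
noncomputable def n2e (v a : V) : ℕ :=
  (Finset.univ.filter fun x => G.Adj a x ∧ ¬G.Adj v x ∧ x ≠ v).card

/-- `|Γ(v) ∩ Γ(a)|`. -/
noncomputable def n3 (v a : V) : ℕ :=
  (Finset.univ.filter fun x => G.Adj v x ∧ G.Adj a x).card

/-- Number of edges of `G` with neither endpoint in `Γ(v) ∪ {v}`. -/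
noncomputable def n1d (v : V) : ℕ :=
  (((Finset.univ : Finset V).powersetCard 2).filter
    (fun s => ∃ a ∈ s, ∃ b ∈ s, s = {a, b} ∧ G.Adj a b ∧
      ¬G.Adj v a ∧ ¬G.Adj v b ∧ a ≠ v ∧ b ≠ v)).card

/-- Number of triangles of `G` containing `a`. -/
noncomputable def tri (a : V) : ℕ :=
  (((Finset.univ : Finset V).powersetCard 2).filter
    (fun s => ∃ x ∈ s, ∃ y ∈ s, s = {x, y} ∧ G.Adj a x ∧ G.Adj a y ∧ G.Adj x y)).card

/-- Number of 2-element subsets `{x,y}` of `V \ {a}` inducing a two-edge path with `a`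
an endpoint. -/
noncomputable def twoPathEnd (a : V) : ℕ :=
  (((Finset.univ : Finset V).powersetCard 2).filter
    (fun s => a ∉ s ∧ ∃ x ∈ s, ∃ y ∈ s, s = {x, y} ∧ G.Adj a x ∧ G.Adj x y ∧ ¬G.Adj a y)).card

/-- Number of 2-element subsets `{b,c} ⊆ Γ(a)` with `b` adjacent to `c`, `b ∈ Γ(v)`,
`c ∈ Γ(v)`. -/
noncomputable def triIn (v a : V) : ℕ :=
  (((Finset.univ : Finset V).powersetCard 2).filter
    (fun s => ∃ b ∈ s, ∃ c ∈ s, s = {b, c} ∧ G.Adj a b ∧ G.Adj a c ∧ G.Adj b c ∧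
      G.Adj v b ∧ G.Adj v c)).card

/-- Number of 2-element subsets `{b,c} ⊆ Γ(a)` with `b` adjacent to `c`, `b ∉ Γ(v)`,
`c ∉ Γ(v)`. -/
noncomputable def triOut (v a : V) : ℕ :=
  (((Finset.univ : Finset V).powersetCard 2).filter
    (fun s => ∃ b ∈ s, ∃ c ∈ s, s = {b, c} ∧ G.Adj a b ∧ G.Adj a c ∧ G.Adj b c ∧
      ¬G.Adj v b ∧ ¬G.Adj v c)).card

set_option linter.unusedSectionVars false

private lemma card_pair_le (x y : V) : ({x, y} : Finset V).card ≤ 2 := by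
  have := Finset.card_insert_le x ({y} : Finset V)
  simpa using this

private lemma distinct3 {a b c : V} (h : ({a, b, c} : Finset V).card = 3) :
    a ≠ b ∧ a ≠ c ∧ b ≠ c := by
  refine ⟨fun he => ?_, fun he => ?_, fun he => ?_⟩
  · have e : ({a, b, c} : Finset V) = {b, c} := by ext x; simp [he]
    rw [e] at h; have := card_pair_le b c; omega
  · have e : ({a, b, c} : Finset V) = {c, b} := by ext x; simp [he]; tauto
    rw [e] at h; have := card_pair_le c b; omega
  · have e : ({a, b, c} : Finset V) = {a, c} := by ext x; simp [he]
    rw [e] at h; have := card_pair_le a c; omega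

private lemma mem3 {x a b c : V} (h : x ∈ ({a, b, c} : Finset V)) :
    x = a ∨ x = b ∨ x = c := by simpa using h

private lemma cnt3_eq_card_triples (v : V) (P : V → V → V → Prop)
    (hd : ∀ a b c, P a b c → a ≠ b ∧ a ≠ c ∧ b ≠ c ∧ v ≠ a ∧ v ≠ b ∧ v ≠ c)
    (huniq : ∀ a b c a' b' c', P a b c → P a' b' c' →
      ({a, b, c} : Finset V) = {a', b', c'} → a = a' ∧ b = b' ∧ c = c') :
    cnt3 v P = (univ.filter fun t : V × V × V => P t.1 t.2.1 t.2.2).card := by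
  unfold cnt3
  symm
  apply Finset.card_bij (fun t _ => ({t.1, t.2.1, t.2.2} : Finset V))
  · intro t ht
    simp only [mem_filter, mem_univ, true_and] at ht
    obtain ⟨h1, h2, h3, h4, h5, h6⟩ := hd _ _ _ ht
    simp only [mem_filter, Finset.mem_powersetCard]
    refine ⟨⟨subset_univ _, ?_⟩, ?_, t.1, by simp, t.2.1, by simp, t.2.2, by simp, rfl, ht⟩
    · rw [card_insert_of_notMem (by simp [h1, h2]),
        card_insert_of_notMem (by simp [h3]), card_singleton]
    · simp [h4, h5, h6]
  · intro t1 ht1 t2 ht2 heq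
    simp only [mem_filter, mem_univ, true_and] at ht1 ht2
    obtain ⟨e1, e2, e3⟩ := huniq _ _ _ _ _ _ ht1 ht2 heq
    exact Prod.ext e1 (Prod.ext e2 e3)
  · intro s hs
    simp only [mem_filter, Finset.mem_powersetCard] at hs
    obtain ⟨⟨-, -⟩, -, a, -, b, -, c, -, rfl, hP⟩ := hs
    exact ⟨(a, b, c), by simp [hP], rfl⟩

private lemma two_mul_cnt3_eq_card_triples (v : V) (P : V → V → V → Prop)
    (hd : ∀ a b c, P a b c → a ≠ b ∧ a ≠ c ∧ b ≠ c ∧ v ≠ a ∧ v ≠ b ∧ v ≠ c)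
    (hsymm : ∀ a b c, P a b c → P c b a)
    (huniq : ∀ a b c a' b' c', P a b c → P a' b' c' →
      ({a, b, c} : Finset V) = {a', b', c'} →
      (a = a' ∧ b = b' ∧ c = c') ∨ (a = c' ∧ b = b' ∧ c = a')) :
    2 * cnt3 v P = (univ.filter fun t : V × V × V => P t.1 t.2.1 t.2.2).card := by
  unfold cnt3
  symm
  have H : ∀ t ∈ (univ.filter fun t : V × V × V => P t.1 t.2.1 t.2.2),
      ({t.1, t.2.1, t.2.2} : Finset V) ∈
        (((Finset.univ : Finset V).powersetCard 3).filter
          (fun s => v ∉ s ∧ ∃ a ∈ s, ∃ b ∈ s, ∃ c ∈ s, s = {a, b, c} ∧ P a b c)) := by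
    intro t ht
    simp only [mem_filter, mem_univ, true_and] at ht
    obtain ⟨h1, h2, h3, h4, h5, h6⟩ := hd _ _ _ ht
    simp only [mem_filter, Finset.mem_powersetCard]
    refine ⟨⟨subset_univ _, ?_⟩, ?_, t.1, by simp, t.2.1, by simp, t.2.2, by simp, rfl, ht⟩
    · rw [card_insert_of_notMem (by simp [h1, h2]),
        card_insert_of_notMem (by simp [h3]), card_singleton]
    · simp [h4, h5, h6]
  rw [Finset.card_eq_sum_card_fiberwise H]
  rw [Finset.sum_congr rfl (fun s hs => ?_), Finset.sum_const, smul_eq_mul, mul_comm]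
  · show ((univ.filter fun t : V × V × V => P t.1 t.2.1 t.2.2).filter
      (fun t => ({t.1, t.2.1, t.2.2} : Finset V) = s)).card = 2
    simp only [mem_filter, Finset.mem_powersetCard] at hs
    obtain ⟨⟨-, -⟩, -, a, -, b, -, c, -, rfl, hP⟩ := hs
    obtain ⟨hab, hac, hbc, -, -, -⟩ := hd _ _ _ hP
    have hset : ((univ.filter fun t : V × V × V => P t.1 t.2.1 t.2.2).filter
        (fun t => ({t.1, t.2.1, t.2.2} : Finset V) = {a, b, c})) =
        ({(a, b, c), (c, b, a)} : Finset (V × V × V)) := by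
      ext t
      simp only [mem_filter, mem_univ, true_and, mem_insert, mem_singleton]
      constructor
      · rintro ⟨hPt, hteq⟩
        rcases huniq _ _ _ _ _ _ hPt hP hteq with ⟨e1, e2, e3⟩ | ⟨e1, e2, e3⟩
        · exact Or.inl (Prod.ext e1 (Prod.ext e2 e3))
        · exact Or.inr (Prod.ext e1 (Prod.ext e2 e3))
      · rintro (rfl | rfl)
        · exact ⟨hP, rfl⟩
        · exact ⟨hsymm _ _ _ hP, by ext x; simp; tauto⟩
    rw [hset, card_insert_of_notMem (by simp [Prod.ext_iff]; tauto), card_singleton]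

private lemma cnt3_congr (v : V) (P Q : V → V → V → Prop)
    (h : ∀ a b c, a ≠ b → a ≠ c → b ≠ c → v ≠ a → v ≠ b → v ≠ c → (P a b c ↔ Q a b c)) :
    cnt3 v P = cnt3 v Q := by
  unfold cnt3
  congr 1
  apply filter_congr
  intro s hs
  simp only [Finset.mem_powersetCard] at hs
  constructor
  · rintro ⟨hv, a, ha, b, hb, c, hc, rfl, hP⟩
    obtain ⟨h1, h2, h3⟩ := distinct3 hs.2
    exact ⟨hv, a, ha, b, hb, c, hc, rfl,
      (h a b c h1 h2 h3 (fun he => hv (he ▸ ha)) (fun he => hv (he ▸ hb))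
        (fun he => hv (he ▸ hc))).mp hP⟩
  · rintro ⟨hv, a, ha, b, hb, c, hc, rfl, hQ⟩
    obtain ⟨h1, h2, h3⟩ := distinct3 hs.2
    exact ⟨hv, a, ha, b, hb, c, hc, rfl,
      (h a b c h1 h2 h3 (fun he => hv (he ▸ ha)) (fun he => hv (he ▸ hb))
        (fun he => hv (he ▸ hc))).mpr hQ⟩

private lemma cnt3_swap (v : V) (P : V → V → V → Prop) :
    cnt3 v P = cnt3 v (fun a b c => P b a c) := by
  unfold cnt3
  congr 1
  apply filter_congr
  intro s _
  constructor
  · rintro ⟨hv, a, ha, b, hb, c, hc, rfl, hP⟩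
    exact ⟨hv, b, hb, a, ha, c, hc, Finset.insert_comm a b {c}, hP⟩
  · rintro ⟨hv, a, ha, b, hb, c, hc, rfl, hP⟩
    exact ⟨hv, b, hb, a, ha, c, hc, Finset.insert_comm a b {c}, hP⟩

private lemma hd4 (v : V) : ∀ a b c : V,
    (G.Adj v a ∧ G.Adj a b ∧ G.Adj b c ∧ ¬G.Adj v b ∧ ¬G.Adj v c ∧ ¬G.Adj a c) →
    a ≠ b ∧ a ≠ c ∧ b ≠ c ∧ v ≠ a ∧ v ≠ b ∧ v ≠ c := by
  intro a b c ⟨h1, h2, h3, h4, h5, h6⟩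
  have h1s := h1.symm; have h2s := h2.symm; have h3s := h3.symm
  refine ⟨?_, ?_, ?_, ?_, ?_, ?_⟩ <;> rintro rfl <;> simp_all

private lemma huniq4 (v : V) : ∀ a b c a' b' c' : V,
    (G.Adj v a ∧ G.Adj a b ∧ G.Adj b c ∧ ¬G.Adj v b ∧ ¬G.Adj v c ∧ ¬G.Adj a c) →
    (G.Adj v a' ∧ G.Adj a' b' ∧ G.Adj b' c' ∧ ¬G.Adj v b' ∧ ¬G.Adj v c' ∧ ¬G.Adj a' c') →
    ({a, b, c} : Finset V) = {a', b', c'} → a = a' ∧ b = b' ∧ c = c' := by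
  intro a b c a' b' c' ⟨h1, h2, h3, h4, h5, h6⟩ ⟨h1', h2', h3', h4', h5', h6'⟩ hset
  have ha' : a' = a ∨ a' = b ∨ a' = c := mem3 (by rw [hset]; simp)
  have hb' : b' = a ∨ b' = b ∨ b' = c := mem3 (by rw [hset]; simp)
  have hc' : c' = a ∨ c' = b ∨ c' = c := mem3 (by rw [hset]; simp)
  have h1s := h1.symm; have h2s := h2.symm; have h3s := h3.symm
  have h1s' := h1'.symm; have h2s' := h2'.symm; have h3s' := h3'.symm
  rcases ha' with rfl | rfl | rfl <;> rcases hb' with rfl | rfl | rfl <;>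
    rcases hc' with rfl | rfl | rfl <;> simp_all

private lemma hd8 (v : V) : ∀ a b c : V,
    (G.Adj v b ∧ G.Adj v a ∧ G.Adj b a ∧ G.Adj b c ∧ ¬G.Adj v c ∧ ¬G.Adj a c) →
    a ≠ b ∧ a ≠ c ∧ b ≠ c ∧ v ≠ a ∧ v ≠ b ∧ v ≠ c := by
  intro a b c ⟨h1, h2, h3, h4, h5, h6⟩
  have h1s := h1.symm; have h2s := h2.symm; have h3s := h3.symm; have h4s := h4.symm
  refine ⟨?_, ?_, ?_, ?_, ?_, ?_⟩ <;> rintro rfl <;> simp_all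

private lemma huniq8 (v : V) : ∀ a b c a' b' c' : V,
    (G.Adj v b ∧ G.Adj v a ∧ G.Adj b a ∧ G.Adj b c ∧ ¬G.Adj v c ∧ ¬G.Adj a c) →
    (G.Adj v b' ∧ G.Adj v a' ∧ G.Adj b' a' ∧ G.Adj b' c' ∧ ¬G.Adj v c' ∧ ¬G.Adj a' c') →
    ({a, b, c} : Finset V) = {a', b', c'} → a = a' ∧ b = b' ∧ c = c' := by
  intro a b c a' b' c' ⟨h1, h2, h3, h4, h5, h6⟩ ⟨h1', h2', h3', h4', h5', h6'⟩ hset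
  have ha' : a' = a ∨ a' = b ∨ a' = c := mem3 (by rw [hset]; simp)
  have hb' : b' = a ∨ b' = b ∨ b' = c := mem3 (by rw [hset]; simp)
  have hc' : c' = a ∨ c' = b ∨ c' = c := mem3 (by rw [hset]; simp)
  have h1s := h1.symm; have h2s := h2.symm; have h3s := h3.symm; have h4s := h4.symm
  have h1s' := h1'.symm; have h2s' := h2'.symm; have h3s' := h3'.symm; have h4s' := h4'.symm
  rcases ha' with rfl | rfl | rfl <;> rcases hb' with rfl | rfl | rfl <;>
    rcases hc' with rfl | rfl | rfl <;> simp_all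

private lemma hd7 (v : V) : ∀ a b c : V,
    (G.Adj v a ∧ G.Adj a b ∧ G.Adj b c ∧ G.Adj v c ∧ ¬G.Adj v b ∧ ¬G.Adj a c ∧ v ≠ b ∧ a ≠ c) →
    a ≠ b ∧ a ≠ c ∧ b ≠ c ∧ v ≠ a ∧ v ≠ b ∧ v ≠ c := by
  intro a b c ⟨h1, h2, h3, h4, h5, h6, h7, h8⟩
  have h1s := h1.symm; have h2s := h2.symm; have h3s := h3.symm; have h4s := h4.symm
  refine ⟨?_, ?_, ?_, ?_, ?_, ?_⟩ <;> rintro rfl <;> simp_all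

private lemma hsymm7 (v : V) : ∀ a b c : V,
    (G.Adj v a ∧ G.Adj a b ∧ G.Adj b c ∧ G.Adj v c ∧ ¬G.Adj v b ∧ ¬G.Adj a c ∧ v ≠ b ∧ a ≠ c) →
    (G.Adj v c ∧ G.Adj c b ∧ G.Adj b a ∧ G.Adj v a ∧ ¬G.Adj v b ∧ ¬G.Adj c a ∧ v ≠ b ∧ c ≠ a) := by
  intro a b c ⟨h1, h2, h3, h4, h5, h6, h7, h8⟩
  exact ⟨h4, h3.symm, h2.symm, h1, h5, fun h => h6 h.symm, h7, h8.symm⟩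

private lemma huniq7 (v : V) : ∀ a b c a' b' c' : V,
    (G.Adj v a ∧ G.Adj a b ∧ G.Adj b c ∧ G.Adj v c ∧ ¬G.Adj v b ∧ ¬G.Adj a c ∧ v ≠ b ∧ a ≠ c) →
    (G.Adj v a' ∧ G.Adj a' b' ∧ G.Adj b' c' ∧ G.Adj v c' ∧ ¬G.Adj v b' ∧ ¬G.Adj a' c' ∧ v ≠ b' ∧ a' ≠ c') →
    ({a, b, c} : Finset V) = {a', b', c'} →
    (a = a' ∧ b = b' ∧ c = c') ∨ (a = c' ∧ b = b' ∧ c = a') := by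
  intro a b c a' b' c' ⟨h1, h2, h3, h4, h5, h6, h7, h8⟩ ⟨h1', h2', h3', h4', h5', h6', h7', h8'⟩ hset
  have ha' : a' = a ∨ a' = b ∨ a' = c := mem3 (by rw [hset]; simp)
  have hb' : b' = a ∨ b' = b ∨ b' = c := mem3 (by rw [hset]; simp)
  have hc' : c' = a ∨ c' = b ∨ c' = c := mem3 (by rw [hset]; simp)
  have h1s := h1.symm; have h2s := h2.symm; have h3s := h3.symm; have h4s := h4.symm
  have h1s' := h1'.symm; have h2s' := h2'.symm; have h3s' := h3'.symm; have h4s' := h4'.symm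
  rcases ha' with rfl | rfl | rfl <;> rcases hb' with rfl | rfl | rfl <;>
    rcases hc' with rfl | rfl | rfl <;> simp_all

private lemma hd9 (v : V) : ∀ a b c : V,
    (G.Adj v b ∧ G.Adj v a ∧ G.Adj v c ∧ G.Adj b a ∧ G.Adj b c ∧ ¬G.Adj a c ∧ a ≠ c) →
    a ≠ b ∧ a ≠ c ∧ b ≠ c ∧ v ≠ a ∧ v ≠ b ∧ v ≠ c := by
  intro a b c ⟨h1, h2, h3, h4, h5, h6, h7⟩
  have h1s := h1.symm; have h2s := h2.symm; have h3s := h3.symm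
  have h4s := h4.symm; have h5s := h5.symm
  refine ⟨?_, ?_, ?_, ?_, ?_, ?_⟩ <;> rintro rfl <;> simp_all

private lemma hsymm9 (v : V) : ∀ a b c : V,
    (G.Adj v b ∧ G.Adj v a ∧ G.Adj v c ∧ G.Adj b a ∧ G.Adj b c ∧ ¬G.Adj a c ∧ a ≠ c) →
    (G.Adj v b ∧ G.Adj v c ∧ G.Adj v a ∧ G.Adj b c ∧ G.Adj b a ∧ ¬G.Adj c a ∧ c ≠ a) := by
  intro a b c ⟨h1, h2, h3, h4, h5, h6, h7⟩
  exact ⟨h1, h3, h2, h5, h4, fun h => h6 h.symm, h7.symm⟩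

private lemma huniq9 (v : V) : ∀ a b c a' b' c' : V,
    (G.Adj v b ∧ G.Adj v a ∧ G.Adj v c ∧ G.Adj b a ∧ G.Adj b c ∧ ¬G.Adj a c ∧ a ≠ c) →
    (G.Adj v b' ∧ G.Adj v a' ∧ G.Adj v c' ∧ G.Adj b' a' ∧ G.Adj b' c' ∧ ¬G.Adj a' c' ∧ a' ≠ c') →
    ({a, b, c} : Finset V) = {a', b', c'} →
    (a = a' ∧ b = b' ∧ c = c') ∨ (a = c' ∧ b = b' ∧ c = a') := by
  intro a b c a' b' c' ⟨h1, h2, h3, h4, h5, h6, h7⟩ ⟨h1', h2', h3', h4', h5', h6', h7'⟩ hset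
  have ha' : a' = a ∨ a' = b ∨ a' = c := mem3 (by rw [hset]; simp)
  have hb' : b' = a ∨ b' = b ∨ b' = c := mem3 (by rw [hset]; simp)
  have hc' : c' = a ∨ c' = b ∨ c' = c := mem3 (by rw [hset]; simp)
  have h1s := h1.symm; have h2s := h2.symm; have h3s := h3.symm
  have h4s := h4.symm; have h5s := h5.symm
  have h1s' := h1'.symm; have h2s' := h2'.symm; have h3s' := h3'.symm
  have h4s' := h4'.symm; have h5s' := h5'.symm
  rcases ha' with rfl | rfl | rfl <;> rcases hb' with rfl | rfl | rfl <;>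
    rcases hc' with rfl | rfl | rfl <;> simp_all

private lemma twoPathEnd_eq [DecidableRel G.Adj] (a : V) : twoPathEnd G a =
    (univ.filter fun p : V × V =>
      G.Adj a p.1 ∧ G.Adj p.1 p.2 ∧ ¬G.Adj a p.2 ∧ p.2 ≠ a).card := by
  unfold twoPathEnd
  symm
  apply Finset.card_bij (fun p _ => ({p.1, p.2} : Finset V))
  · intro p hp
    simp only [mem_filter, mem_univ, true_and] at hp
    obtain ⟨h1, h2, h3, h4⟩ := hp
    simp only [mem_filter, Finset.mem_powersetCard]
    refine ⟨⟨subset_univ _, ?_⟩, ?_, p.1, by simp, p.2, by simp, rfl, h1, h2, h3⟩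
    · rw [card_insert_of_notMem (by simp [h2.ne]), card_singleton]
    · simp [Ne.symm h1.ne', Ne.symm h4]
  · intro p hp q hq heq
    simp only [mem_filter, mem_univ, true_and] at hp hq
    obtain ⟨h1, h2, h3, h4⟩ := hp
    obtain ⟨h1', h2', h3', h4'⟩ := hq
    have hq1 : q.1 = p.1 ∨ q.1 = p.2 := by
      have : q.1 ∈ ({p.1, p.2} : Finset V) := by rw [heq]; simp
      simpa using this
    have hq2 : q.2 = p.1 ∨ q.2 = p.2 := by
      have : q.2 ∈ ({p.1, p.2} : Finset V) := by rw [heq]; simp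
      simpa using this
    have hne := h2.ne
    have hne' := h2'.ne
    rcases hq1 with e1 | e1 <;> rcases hq2 with e2 | e2
    · exfalso; rw [e1, e2] at h2'; exact G.irrefl h2'
    · exact Prod.ext e1.symm e2.symm
    · exfalso; rw [e1] at h1'; exact h3 h1'
    · exfalso; rw [e1] at h1'; exact h3 h1'
  · intro s hs
    simp only [mem_filter, Finset.mem_powersetCard] at hs
    obtain ⟨⟨-, -⟩, hva, x, -, y, hy, rfl, h1, h2, h3⟩ := hs
    exact ⟨(x, y), by simp [h1, h2, h3]; exact fun he => hva (he ▸ hy), rfl⟩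

private lemma twoPathEnd_split [DecidableRel G.Adj] {v a : V} (hva : G.Adj v a) :
    twoPathEnd G a = n2c G v a +
      (univ.filter fun p : V × V =>
        G.Adj a p.1 ∧ G.Adj p.1 p.2 ∧ ¬G.Adj a p.2 ∧ p.2 ≠ a ∧ p.1 ≠ v).card := by
  rw [twoPathEnd_eq]
  rw [← Finset.card_filter_add_card_filter_not
    (p := fun p : V × V => p.1 = v)
    (s := univ.filter fun p : V × V =>
      G.Adj a p.1 ∧ G.Adj p.1 p.2 ∧ ¬G.Adj a p.2 ∧ p.2 ≠ a)]
  congr 1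
  · unfold n2c
    apply Finset.card_nbij' (i := fun p : V × V => p.2) (j := fun x => (v, x))
    · intro p hp
      simp only [mem_coe, mem_filter, mem_univ, true_and] at hp ⊢
      obtain ⟨⟨h1, h2, h3, h4⟩, h5⟩ := hp
      exact ⟨h5 ▸ h2, h3, h4⟩
    · intro x hx
      simp only [mem_coe, mem_filter, mem_univ, true_and] at hx ⊢
      obtain ⟨h1, h2, h3⟩ := hx
      exact ⟨⟨hva.symm, h1, h2, h3⟩, trivial⟩
    · intro p hp
      simp only [mem_coe, mem_filter, mem_univ, true_and] at hp
      exact Prod.ext hp.2.symm rfl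
    · intro x _
      rfl
  · rw [Finset.filter_filter]
    congr 1
    apply filter_congr
    intro p _
    tauto

private lemma hF4 [DecidableRel G.Adj] (v : V) : F4 G v = (univ.filter fun t : V × V × V =>
    G.Adj v t.1 ∧ G.Adj t.1 t.2.1 ∧ G.Adj t.2.1 t.2.2 ∧ ¬G.Adj v t.2.1 ∧
    ¬G.Adj v t.2.2 ∧ ¬G.Adj t.1 t.2.2).card := by
  rw [F4, cnt3_eq_card_triples v _ (hd4 G v) (huniq4 G v)]
  congr

private lemma hF8 [DecidableRel G.Adj] (v : V) : F8'' G v = (univ.filter fun t : V × V × V =>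
    G.Adj v t.2.1 ∧ G.Adj v t.1 ∧ G.Adj t.2.1 t.1 ∧ G.Adj t.2.1 t.2.2 ∧
    ¬G.Adj v t.2.2 ∧ ¬G.Adj t.1 t.2.2).card := by
  rw [F8'', cnt3_swap, cnt3_eq_card_triples v _ (hd8 G v) (huniq8 G v)]
  congr

private lemma hF7 [DecidableRel G.Adj] (v : V) : 2 * F7 G v = (univ.filter fun t : V × V × V =>
    G.Adj v t.1 ∧ G.Adj t.1 t.2.1 ∧ G.Adj t.2.1 t.2.2 ∧ G.Adj v t.2.2 ∧
    ¬G.Adj v t.2.1 ∧ ¬G.Adj t.1 t.2.2 ∧ v ≠ t.2.1 ∧ t.1 ≠ t.2.2).card := by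
  rw [F7, cnt3_congr v _ (fun a b c => G.Adj v a ∧ G.Adj a b ∧ G.Adj b c ∧ G.Adj v c ∧
      ¬G.Adj v b ∧ ¬G.Adj a c ∧ v ≠ b ∧ a ≠ c) (fun a b c hab hac hbc hva hvb hvc => by tauto)]
  rw [two_mul_cnt3_eq_card_triples v _ (hd7 G v) (hsymm7 G v) (huniq7 G v)]
  congr

private lemma hF9 [DecidableRel G.Adj] (v : V) : 2 * F9' G v = (univ.filter fun t : V × V × V =>
    G.Adj v t.2.1 ∧ G.Adj v t.1 ∧ G.Adj v t.2.2 ∧ G.Adj t.2.1 t.1 ∧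
    G.Adj t.2.1 t.2.2 ∧ ¬G.Adj t.1 t.2.2 ∧ t.1 ≠ t.2.2).card := by
  rw [F9', cnt3_swap]
  rw [cnt3_congr v _ (fun a b c => G.Adj v b ∧ G.Adj v a ∧ G.Adj v c ∧ G.Adj b a ∧
      G.Adj b c ∧ ¬G.Adj a c ∧ a ≠ c) (fun a b c hab hac hbc hva hvb hvc => by tauto)]
  rw [two_mul_cnt3_eq_card_triples v _ (hd9 G v) (hsymm9 G v) (huniq9 G v)]
  congr

private lemma key_sum [DecidableRel G.Adj] (v : V) :
    ∑ a ∈ G.neighborFinset v, (univ.filter fun p : V × V =>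
      G.Adj a p.1 ∧ G.Adj p.1 p.2 ∧ ¬G.Adj a p.2 ∧ p.2 ≠ a ∧ p.1 ≠ v).card =
    F4 G v + 2 * F7 G v + F8'' G v + 2 * F9' G v := by
  classical
  set TS : Finset (V × V × V) := univ.filter fun t : V × V × V =>
    G.Adj v t.1 ∧ G.Adj t.1 t.2.1 ∧ G.Adj t.2.1 t.2.2 ∧ ¬G.Adj t.1 t.2.2 ∧
    t.2.2 ≠ t.1 ∧ t.2.1 ≠ v ∧ t.2.2 ≠ v with hTSdef
  have H : ∀ t ∈ TS, t.1 ∈ G.neighborFinset v := by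
    intro t ht
    rw [hTSdef, mem_filter] at ht
    rw [SimpleGraph.mem_neighborFinset]
    exact ht.2.1
  have hTS : TS.card = ∑ a ∈ G.neighborFinset v, (TS.filter fun t => t.1 = a).card :=
    Finset.card_eq_sum_card_fiberwise H
  have hfib : ∀ a ∈ G.neighborFinset v, (TS.filter fun t => t.1 = a).card =
      (univ.filter fun p : V × V =>
        G.Adj a p.1 ∧ G.Adj p.1 p.2 ∧ ¬G.Adj a p.2 ∧ p.2 ≠ a ∧ p.1 ≠ v).card := by
    intro a ha
    rw [SimpleGraph.mem_neighborFinset] at ha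
    apply Finset.card_nbij' (i := fun t : V × V × V => t.2) (j := fun p : V × V => (a, p.1, p.2))
    · intro t ht
      rw [mem_coe, mem_filter, hTSdef, mem_filter] at ht
      obtain ⟨⟨-, h1, h2, h3, h4, h5, h6, h7⟩, he⟩ := ht
      rw [mem_coe, mem_filter]
      exact ⟨mem_univ _, he ▸ h2, h3, he ▸ h4, he ▸ h5, h6⟩
    · intro p hp
      rw [mem_coe, mem_filter] at hp
      obtain ⟨-, h1, h2, h3, h4, h5⟩ := hp
      rw [mem_coe, mem_filter, hTSdef, mem_filter]
      refine ⟨⟨mem_univ _, ha, h1, h2, h3, h4, h5, ?_⟩, rfl⟩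
      rintro rfl
      exact h3 ha.symm
    · intro t ht
      rw [mem_coe, mem_filter] at ht
      exact Prod.ext ht.2.symm rfl
    · intro p _
      rfl
  rw [Finset.sum_congr rfl hfib] at hTS
  rw [← hTS]
  -- split TS into four parts
  have s1 := Finset.card_filter_add_card_filter_not
    (s := TS) (p := fun t : V × V × V => G.Adj v t.2.1)
  have s2 := Finset.card_filter_add_card_filter_not
    (s := TS.filter fun t : V × V × V => G.Adj v t.2.1)
    (p := fun t : V × V × V => G.Adj v t.2.2)
  have s3 := Finset.card_filter_add_card_filter_not
    (s := TS.filter fun t : V × V × V => ¬G.Adj v t.2.1)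
    (p := fun t : V × V × V => G.Adj v t.2.2)
  -- identify the four parts
  have e_ff : ((TS.filter fun t : V × V × V => ¬G.Adj v t.2.1).filter
      fun t : V × V × V => ¬G.Adj v t.2.2) = (univ.filter fun t : V × V × V =>
      G.Adj v t.1 ∧ G.Adj t.1 t.2.1 ∧ G.Adj t.2.1 t.2.2 ∧ ¬G.Adj v t.2.1 ∧
      ¬G.Adj v t.2.2 ∧ ¬G.Adj t.1 t.2.2) := by
    rw [hTSdef, Finset.filter_filter, Finset.filter_filter]
    apply filter_congr
    intro t _
    constructor
    · rintro ⟨⟨h1, h2, h3, h4, h5, h6, h7⟩, h8, h9⟩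
      exact ⟨h1, h2, h3, h8, h9, h4⟩
    · rintro ⟨h1, h2, h3, h4, h5, h6⟩
      refine ⟨⟨h1, h2, h3, h6, ?_, ?_, ?_⟩, h4, h5⟩
      · intro he; rw [he] at h5; exact h5 h1
      · rintro rfl; exact h5 h3
      · rintro rfl; exact h4 h3.symm
  have e_tf : ((TS.filter fun t : V × V × V => G.Adj v t.2.1).filter
      fun t : V × V × V => ¬G.Adj v t.2.2) = (univ.filter fun t : V × V × V =>
      G.Adj v t.2.1 ∧ G.Adj v t.1 ∧ G.Adj t.2.1 t.1 ∧ G.Adj t.2.1 t.2.2 ∧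
      ¬G.Adj v t.2.2 ∧ ¬G.Adj t.1 t.2.2) := by
    rw [hTSdef, Finset.filter_filter, Finset.filter_filter]
    apply filter_congr
    intro t _
    constructor
    · rintro ⟨⟨h1, h2, h3, h4, h5, h6, h7⟩, h8, h9⟩
      exact ⟨h8, h1, h2.symm, h3, h9, h4⟩
    · rintro ⟨k1, k2, k3, k4, k5, k6⟩
      refine ⟨⟨k2, k3.symm, k4, k6, ?_, k1.ne', ?_⟩, k1, k5⟩
      · intro he; rw [he] at k5; exact k5 k2
      · rintro rfl; exact k6 k2.symm
  have e_ft : ((TS.filter fun t : V × V × V => ¬G.Adj v t.2.1).filter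
      fun t : V × V × V => G.Adj v t.2.2) = (univ.filter fun t : V × V × V =>
      G.Adj v t.1 ∧ G.Adj t.1 t.2.1 ∧ G.Adj t.2.1 t.2.2 ∧ G.Adj v t.2.2 ∧
      ¬G.Adj v t.2.1 ∧ ¬G.Adj t.1 t.2.2 ∧ v ≠ t.2.1 ∧ t.1 ≠ t.2.2) := by
    rw [hTSdef, Finset.filter_filter, Finset.filter_filter]
    apply filter_congr
    intro t _
    constructor
    · rintro ⟨⟨h1, h2, h3, h4, h5, h6, h7⟩, h8, h9⟩
      exact ⟨h1, h2, h3, h9, h8, h4, Ne.symm h6, Ne.symm h5⟩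
    · rintro ⟨k1, k2, k3, k4, k5, k6, k7, k8⟩
      exact ⟨⟨k1, k2, k3, k6, Ne.symm k8, Ne.symm k7, k4.ne'⟩, k5, k4⟩
  have e_tt : ((TS.filter fun t : V × V × V => G.Adj v t.2.1).filter
      fun t : V × V × V => G.Adj v t.2.2) = (univ.filter fun t : V × V × V =>
      G.Adj v t.2.1 ∧ G.Adj v t.1 ∧ G.Adj v t.2.2 ∧ G.Adj t.2.1 t.1 ∧
      G.Adj t.2.1 t.2.2 ∧ ¬G.Adj t.1 t.2.2 ∧ t.1 ≠ t.2.2) := by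
    rw [hTSdef, Finset.filter_filter, Finset.filter_filter]
    apply filter_congr
    intro t _
    constructor
    · rintro ⟨⟨h1, h2, h3, h4, h5, h6, h7⟩, h8, h9⟩
      exact ⟨h8, h1, h9, h2.symm, h3, h4, Ne.symm h5⟩
    · rintro ⟨k1, k2, k3, k4, k5, k6, k7⟩
      exact ⟨⟨k2, k4.symm, k5, k6, Ne.symm k7, k1.ne', k3.ne'⟩, k1, k3⟩
  rw [e_ff] at s3
  rw [e_ft] at s3
  rw [e_tf] at s2
  rw [e_tt] at s2
  rw [← hF4 G v] at s3
  rw [← hF7 G v] at s3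
  rw [← hF8 G v] at s2
  rw [← hF9 G v] at s2
  omega

theorem statement15 [DecidableRel G.Adj] (v : V) :
    ∑ a ∈ G.neighborFinset v, ((twoPathEnd G a : ℤ) - (n2c G v a : ℤ)) =
      (F4 G v : ℤ) + 2 * (F7 G v : ℤ) + (F8'' G v : ℤ) + 2 * (F9' G v : ℤ) := by
  classical
  have hstep : ∀ a ∈ G.neighborFinset v,
      ((twoPathEnd G a : ℤ) - (n2c G v a : ℤ)) =
      (((univ.filter fun p : V × V => G.Adj a p.1 ∧ G.Adj p.1 p.2 ∧ ¬G.Adj a p.2 ∧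
        p.2 ≠ a ∧ p.1 ≠ v).card : ℕ) : ℤ) := by
    intro a ha
    rw [SimpleGraph.mem_neighborFinset] at ha
    rw [twoPathEnd_split G ha]
    push_cast
    ring
  rw [Finset.sum_congr rfl hstep, ← Nat.cast_sum, key_sum G v]
  push_cast
  ring


end FourProfiles
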